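/- Suppose x⁰ ∈ ℝ^n satisfies |⟨a_i, x⁰⟩| = b_i for i = 1,…,m and ⟨x⁰, x̂⟩ ≥ 0. If for every unit vector δ ∈ ℝ^n with ⟨δ, x̂⟩ ≥ 0 there exists an index i with ⟨a_i, x⁰⟩·⟨a_i, δ⟩ > 0, then x⁰ is the unique maximizer of ⟨x, x̂⟩ over {x ∈ ℝ^n : |⟨a_i, x⟩| ≤ b_i for all i}. -/

import Mathlib

/-- PhaseMax uniqueness condition (real case). -/
theorem phasemax_uniqueness_real {n m : ℕ}
    (a : Fin m → EuclideanSpace ℝ (Fin n)) (b : Fin m → ℝ)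
    (x0 xhat : EuclideanSpace ℝ (Fin n))
    (hb : ∀ i, 0 ≤ b i)
    (hmeas : ∀ i, |(inner ℝ (a i) x0 : ℝ)| = b i)
    (halign : 0 ≤ (inner ℝ x0 xhat : ℝ))
    (hcond : ∀ δ : EuclideanSpace ℝ (Fin n), ‖δ‖ = 1 →
      0 ≤ (inner ℝ δ xhat : ℝ) →
      ∃ i, 0 < (inner ℝ (a i) x0 : ℝ) * (inner ℝ (a i) δ : ℝ)) :
    ∀ x : EuclideanSpace ℝ (Fin n),
      (∀ i, |(inner ℝ (a i) x : ℝ)| ≤ b i) →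
      (inner ℝ x0 xhat : ℝ) ≤ (inner ℝ x xhat : ℝ) → x = x0 := by
  intro x hx hmax
  by_contra hne
  set δ : EuclideanSpace ℝ (Fin n) := x - x0 with hδ
  have hδne : δ ≠ 0 := sub_ne_zero.mpr hne
  have hnorm : ‖δ‖ ≠ 0 := norm_ne_zero_iff.mpr hδne
  have h1 : ‖(‖δ‖⁻¹ : ℝ) • δ‖ = 1 := by
    rw [norm_smul, norm_inv, norm_norm, inv_mul_cancel₀ hnorm]
  have hδx : (inner ℝ δ xhat : ℝ) = inner ℝ x xhat - inner ℝ x0 xhat := by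
    rw [hδ, inner_sub_left]
  have h2 : 0 ≤ (inner ℝ ((‖δ‖⁻¹ : ℝ) • δ) xhat : ℝ) := by
    rw [real_inner_smul_left]
    exact mul_nonneg (by positivity) (by linarith)
  obtain ⟨i, hi⟩ := hcond _ h1 h2
  rw [real_inner_smul_right] at hi
  have hpos : 0 < (‖δ‖⁻¹ : ℝ) := by positivity
  have hi' : 0 < (inner ℝ (a i) x0 : ℝ) * (inner ℝ (a i) δ : ℝ) := by nlinarith
  have hsum : (inner ℝ (a i) x : ℝ) = inner ℝ (a i) x0 + inner ℝ (a i) δ := by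
    rw [hδ, inner_sub_right]; ring
  have hb' := hmeas i
  have hle := hx i
  rw [hsum, ← hb'] at hle
  set s := (inner ℝ (a i) x0 : ℝ)
  set t := (inner ℝ (a i) δ : ℝ)
  rcases abs_cases s with ⟨h, hs⟩ | ⟨h, hs⟩ <;>
    rcases abs_cases (s + t) with ⟨h2', _⟩ | ⟨h2', _⟩ <;> nlinarith
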